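/- Let ψ ∈ C²(ℝ^d) satisfy sup_x (|ψ(x)| + |∇ψ(x)| + |D²ψ(x)|)/W(x) < ∞. Then ψ ∈ I_0^W if and only if for all x, y ∈ ℝ^d: Δψ(x) + Δψ(y) − ⟨K(x,y), ∇ψ(x)⟩ − ⟨K(y,x), ∇ψ(y)⟩ = 0. In particular, if ψ ∈ I_0^W then Δψ(x) − ⟨K(x,x), ∇ψ(x)⟩ = 0 for all x. Moreover, if Q ∈ ℝ^d is a constant vector with ⟨Q, K(x,y)⟩ = −⟨Q, K(y,x)⟩ for all x, y, and sup_x (1+|x|)/W(x) < ∞, then every function of the form ψ(x) = ⟨Q, x⟩ + g with g ∈ ℝ belongs to I_0^W. -/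

import Mathlib

open MeasureTheory Real Set Filter Metric
open scoped Topology RealInnerProductSpace NNReal ENNReal

noncomputable section

abbrev Ed (d : ℕ) : Type := EuclideanSpace ℝ (Fin d)

variable {d : ℕ}

/-- Second-order partial derivative `∂_i ∂_j φ (x)`. -/
def hess2 (φ : Ed d → ℝ) (x : Ed d) (i j : Fin d) : ℝ :=
  iteratedFDeriv ℝ 2 φ x ![EuclideanSpace.single i 1, EuclideanSpace.single j 1]

/-- The Laplacian. -/
def lap (φ : Ed d → ℝ) (x : Ed d) : ℝ := ∑ i, hess2 φ x i i

/-- The Kolmogorov operator with unit diffusion: `L φ = Δφ + ⟨B, ∇φ⟩`. -/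
def LopI (B : Ed d → Ed d) (φ : Ed d → ℝ) (x : Ed d) : ℝ :=
  lap φ x + ⟪B x, gradient φ x⟫

/-- Membership in `𝒫_V(ℝ^d)`. -/
def memPV (V : Ed d → ℝ) (μ : Measure (Ed d)) : Prop :=
  IsProbabilityMeasure μ ∧ Integrable V μ

/-- Growth bound defining the class of admissible `ψ`. -/
def GrowthW (W ψ : Ed d → ℝ) : Prop :=
  ∃ M : ℝ, ∀ x, |ψ x| + ‖gradient ψ x‖ + ‖iteratedFDeriv ℝ 2 ψ x‖ ≤ M * W x

/-- The convolution drift `b(x,μ) = -∫ K(x,y) μ(dy)`. -/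
def bConv (K : Ed d → Ed d → Ed d) (μ : Measure (Ed d)) (x : Ed d) : Ed d :=
  -∫ y, K x y ∂μ

/-- The class `I_0^W` for the drift `b(x,μ) = -∫ K(x,y) μ(dy)` and `A = I`. -/
def I0Wconv (K : Ed d → Ed d → Ed d) (V W : Ed d → ℝ) (ψ : Ed d → ℝ) : Prop :=
  ContDiff ℝ 2 ψ ∧ GrowthW W ψ ∧
    ∀ μ : Measure (Ed d), memPV V μ →
      ∫ x, LopI (bConv K μ) ψ x ∂μ = 0

/- ### Auxiliary lemmas -/

lemma myIntegrableDirac {E : Type*} [NormedAddCommGroup E] (f : Ed d → E) (a : Ed d) :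
    Integrable f (Measure.dirac a) := by
  rw [integrable_congr (ae_eq_dirac f)]; exact integrable_const _

lemma abs_hess2_le (φ : Ed d → ℝ) (x : Ed d) (i j : Fin d) :
    |hess2 φ x i j| ≤ ‖iteratedFDeriv ℝ 2 φ x‖ := by
  have h := (iteratedFDeriv ℝ 2 φ x).le_opNorm
    ![EuclideanSpace.single i 1, EuclideanSpace.single j 1]
  have h1 : ∀ k : Fin 2,
      ‖(![EuclideanSpace.single i (1:ℝ), EuclideanSpace.single j 1] : Fin 2 → Ed d) k‖ = 1 := by
    intro k; fin_cases k <;> simp [EuclideanSpace.norm_single]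
  calc |hess2 φ x i j|
      ≤ ‖iteratedFDeriv ℝ 2 φ x‖ *
        ∏ k, ‖(![EuclideanSpace.single i (1:ℝ), EuclideanSpace.single j 1] : Fin 2 → Ed d) k‖ := h
    _ = ‖iteratedFDeriv ℝ 2 φ x‖ := by simp [h1]

lemma abs_lap_le (φ : Ed d → ℝ) (x : Ed d) :
    |lap φ x| ≤ (d : ℝ) * ‖iteratedFDeriv ℝ 2 φ x‖ := by
  calc |lap φ x| ≤ ∑ i, |hess2 φ x i i| := Finset.abs_sum_le_sum_abs _ _
    _ ≤ ∑ _i : Fin d, ‖iteratedFDeriv ℝ 2 φ x‖ :=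
        Finset.sum_le_sum fun i _ => abs_hess2_le φ x i i
    _ = (d : ℝ) * ‖iteratedFDeriv ℝ 2 φ x‖ := by simp [mul_comm]

/-- The key characterization lemma, for arbitrary admissible `ψ`. -/
lemma key_iff (V : Ed d → ℝ) (hVc : Continuous V) (hV1 : ∀ x, 1 ≤ V x)
    (γ : ℝ) (hγ0 : 0 < γ) (hγ1 : γ ≤ 1)
    (W : Ed d → ℝ) (hW : W = fun x => V x ^ γ)
    (K : Ed d → Ed d → Ed d)
    (hKmeas : Measurable fun p : Ed d × Ed d => K p.1 p.2)
    (CK : ℝ) (hKgrow : ∀ x y, ‖K x y‖ ≤ CK * V x ^ (1 - γ))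
    (ψ : Ed d → ℝ) (hψC2 : ContDiff ℝ 2 ψ) (hψgrow : GrowthW W ψ) :
    I0Wconv K V W ψ ↔
      ∀ x y : Ed d,
        lap ψ x + lap ψ y - ⟪K x y, gradient ψ x⟫ - ⟪K y x, gradient ψ y⟫ = 0 := by
  have hVpos : ∀ x, 0 < V x := fun x => lt_of_lt_of_le one_pos (hV1 x)
  constructor
  · rintro ⟨-, -, h⟩ x y
    -- Dirac measures belong to 𝒫_V
    have hmem : ∀ a : Ed d, memPV V (Measure.dirac a) :=
      fun a => ⟨inferInstance, myIntegrableDirac V a⟩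
    -- drift for a dirac measure
    have hb : ∀ a x' : Ed d, bConv K (Measure.dirac a) x' = -K x' a := by
      intro a x'; unfold bConv; rw [integral_dirac]
    -- diagonal identity
    have E : ∀ a : Ed d, lap ψ a - ⟪K a a, gradient ψ a⟫ = 0 := by
      intro a
      have h0 := h (Measure.dirac a) (hmem a)
      rw [integral_dirac] at h0
      unfold LopI at h0
      rw [hb a a, inner_neg_left] at h0
      linarith
    -- the mixture measure
    set μ : Measure (Ed d) := (2:ℝ≥0∞)⁻¹ • (Measure.dirac x + Measure.dirac y) with hμ
    have hprob : IsProbabilityMeasure μ := by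
      constructor
      rw [hμ]
      simp [ENNReal.inv_two_add_inv_two]
    have hmix : ∀ {E : Type} [NormedAddCommGroup E] [NormedSpace ℝ E] [CompleteSpace E] (f : Ed d → E),
        ∫ z, f z ∂μ = (2:ℝ)⁻¹ • (f x + f y) := by
      intro E _ _ _ f
      rw [hμ, integral_smul_measure,
        integral_add_measure (myIntegrableDirac f x) (myIntegrableDirac f y),
        integral_dirac, integral_dirac]
      norm_num
    have hVint : Integrable V μ := by
      rw [hμ]
      exact (Integrable.add_measure (myIntegrableDirac V x) (myIntegrableDirac V y)).smul_measure
        (by simp)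
    have h0 := h μ ⟨hprob, hVint⟩
    have hbμ : ∀ x' : Ed d, bConv K μ x' = -((2:ℝ)⁻¹ • (K x' x + K x' y)) := by
      intro x'; unfold bConv; rw [hmix]
    have hL : ∀ a : Ed d, LopI (bConv K μ) ψ a
        = lap ψ a - (2:ℝ)⁻¹ * (⟪K a x, gradient ψ a⟫ + ⟪K a y, gradient ψ a⟫) := by
      intro a
      unfold LopI
      rw [hbμ a, inner_neg_left, inner_smul_left, inner_add_left]
      simp only [starRingEnd_apply, star_trivial]
      ring
    rw [hmix (f := LopI (bConv K μ) ψ), hL, hL] at h0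
    simp only [smul_eq_mul] at h0
    have Ex := E x; have Ey := E y
    linarith
  · intro hF
    refine ⟨hψC2, hψgrow, ?_⟩
    rintro μ ⟨hprob, hVint⟩
    obtain ⟨M, hM⟩ := hψgrow
    set G : Ed d → Ed d := gradient ψ with hG
    have hGc : Continuous G := by
      rw [hG]; unfold gradient
      exact (LinearIsometryEquiv.continuous _).comp (hψC2.continuous_fderiv (by norm_num))
    have hψ2c : Continuous fun x => iteratedFDeriv ℝ 2 ψ x :=
      hψC2.continuous_iteratedFDeriv le_rfl
    have hlapc : Continuous (lap ψ) := by
      unfold lap hess2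
      exact continuous_finset_sum _ fun i _ =>
        continuous_eval.comp (hψ2c.prodMk continuous_const)
    -- bounds
    have hWx : ∀ x, W x = V x ^ γ := fun x => by rw [hW]
    have hWpos : ∀ x, 0 < W x := fun x => by
      rw [hWx]; exact Real.rpow_pos_of_pos (hVpos x) γ
    have hM0 : 0 ≤ M := by
      have h1 := hM 0
      have := abs_nonneg (ψ 0)
      have := norm_nonneg (G 0)
      have := norm_nonneg (iteratedFDeriv ℝ 2 ψ 0)
      nlinarith [hWpos 0]
    have hWV : ∀ x, W x ≤ V x := by
      intro x
      have h := Real.rpow_le_rpow_of_exponent_le (hV1 x) hγ1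
      rw [Real.rpow_one] at h
      rw [hWx]; exact h
    have hCK : 0 ≤ CK := by
      have h1 := (norm_nonneg (K 0 0)).trans (hKgrow 0 0)
      have h2 : (0:ℝ) < V 0 ^ (1 - γ) := Real.rpow_pos_of_pos (hVpos 0) _
      nlinarith
    set C : ℝ := (d : ℝ) * M + CK * M with hC
    set g : Ed d × Ed d → ℝ := fun p => lap ψ p.1 - ⟪K p.1 p.2, G p.1⟫ with hg
    have hgb : ∀ p : Ed d × Ed d, ‖g p‖ ≤ C * V p.1 := by
      rintro ⟨x, y⟩
      have hMx := hM x
      have habs : 0 ≤ |ψ x| := abs_nonneg _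
      have hgn : 0 ≤ ‖G x‖ := norm_nonneg _
      have hin : 0 ≤ ‖iteratedFDeriv ℝ 2 ψ x‖ := norm_nonneg _
      have h1 : |lap ψ x| ≤ (d : ℝ) * (M * W x) := by
        refine (abs_lap_le ψ x).trans ?_
        exact mul_le_mul_of_nonneg_left (by linarith) (Nat.cast_nonneg d)
      have h2 : |⟪K x y, G x⟫| ≤ (CK * V x ^ (1 - γ)) * (M * W x) := by
        refine (abs_real_inner_le_norm _ _).trans ?_
        refine mul_le_mul (hKgrow x y) (by linarith) (norm_nonneg _) ?_
        exact mul_nonneg hCK (le_of_lt (Real.rpow_pos_of_pos (hVpos x) _))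
      have hrp : V x ^ (1 - γ) * V x ^ γ = V x := by
        rw [← Real.rpow_add (hVpos x)]; simp
      have h2' : (CK * V x ^ (1 - γ)) * (M * W x) = CK * M * V x := by
        rw [hWx]
        calc (CK * V x ^ (1 - γ)) * (M * V x ^ γ)
            = CK * M * (V x ^ (1 - γ) * V x ^ γ) := by ring
          _ = CK * M * V x := by rw [hrp]
      have h1' : (d : ℝ) * (M * W x) ≤ (d : ℝ) * M * V x := by
        rw [mul_assoc]
        exact mul_le_mul_of_nonneg_left
          (mul_le_mul_of_nonneg_left (hWV x) hM0) (Nat.cast_nonneg d)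
      have habs2 : ‖g (x, y)‖ ≤ |lap ψ x| + |⟪K x y, G x⟫| := by
        rw [hg]; exact (abs_sub _ _)
      rw [hC]
      calc ‖g (x, y)‖ ≤ |lap ψ x| + |⟪K x y, G x⟫| := habs2
        _ ≤ (d : ℝ) * M * V x + CK * M * V x := by linarith
        _ = ((d : ℝ) * M + CK * M) * V x := by ring
    have hVm : Measurable V := hVc.measurable
    have hVprod : Integrable (fun p : Ed d × Ed d => V p.1) (μ.prod μ) := by
      have hmap : (μ.prod μ).map Prod.fst = μ := by
        rw [Measure.map_fst_prod]; simp
      exact (integrable_map_measure hVm.aestronglyMeasurable measurable_fst.aemeasurable).mp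
        (by rwa [hmap])
    have hgm : AEStronglyMeasurable g (μ.prod μ) := by
      refine Measurable.aestronglyMeasurable ?_
      rw [hg]
      exact ((hlapc.measurable).comp measurable_fst).sub
        (hKmeas.inner ((hGc.measurable).comp measurable_fst))
    have hgint : Integrable g (μ.prod μ) := by
      refine Integrable.mono' (hVprod.const_mul C) hgm ?_
      filter_upwards with p
      simpa [mul_comm] using hgb p
    -- pointwise identity L = ∫ g(x,·) dμ
    have hKint : ∀ x : Ed d, Integrable (fun y => K x y) μ := by
      intro x
      refine Integrable.mono' (integrable_const (CK * V x ^ (1 - γ))) ?_ ?_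
      · exact (hKmeas.comp (measurable_prodMk_left)).aestronglyMeasurable
      · filter_upwards with y using hKgrow x y
    have hinner_int : ∀ x : Ed d, Integrable (fun y => ⟪K x y, G x⟫) μ := fun x =>
      (hKint x).inner_const (G x)
    have hLpt : ∀ x : Ed d, LopI (bConv K μ) ψ x = ∫ y, g (x, y) ∂μ := by
      intro x
      have h1 : ⟪∫ y, K x y ∂μ, G x⟫ = ∫ y, ⟪K x y, G x⟫ ∂μ := by
        rw [real_inner_comm, ← integral_inner (hKint x) (G x)]
        exact integral_congr_ae (Filter.Eventually.of_forall fun y => real_inner_comm _ _)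
      have h2 : ∫ y, g (x, y) ∂μ = lap ψ x - ∫ y, ⟪K x y, G x⟫ ∂μ := by
        simp only [hg]
        rw [integral_sub (integrable_const _) (hinner_int x)]
        simp
      unfold LopI bConv
      rw [← hG, inner_neg_left, h1, h2]
      ring
    calc ∫ x, LopI (bConv K μ) ψ x ∂μ = ∫ x, ∫ y, g (x, y) ∂μ ∂μ := by
          exact integral_congr_ae (Filter.Eventually.of_forall hLpt)
      _ = ∫ p, g p ∂(μ.prod μ) := (integral_prod g hgint).symm
      _ = 0 := by
          have hpt : ∀ p : Ed d × Ed d, g p = -g p.swap := by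
            rintro ⟨x, y⟩
            have h := hF x y
            simp only [hg, Prod.swap, hG]
            linarith
          have h1 : ∫ p, g p ∂(μ.prod μ) = -∫ p, g p.swap ∂(μ.prod μ) := by
            rw [← integral_neg]
            exact integral_congr_ae (Filter.Eventually.of_forall hpt)
          rw [integral_prod_swap g] at h1
          linarith

/-- **Proposition 2** : characterization of `I_0^W` for convolution drifts. -/
theorem stmt5_I0W_characterization
    (V : Ed d → ℝ) (hV : ContDiff ℝ 2 V) (hV1 : ∀ x, 1 ≤ V x)
    (hVinf : Tendsto V (cocompact (Ed d)) atTop)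
    (γ : ℝ) (hγ : γ ∈ Set.Ioc (0:ℝ) (1/2))
    (W : Ed d → ℝ) (hW : W = fun x => V x ^ γ)
    (K : Ed d → Ed d → Ed d)
    (hKmeas : Measurable fun p : Ed d × Ed d => K p.1 p.2)
    (CK : ℝ) (hKgrow : ∀ x y, ‖K x y‖ ≤ CK * V x ^ (1 - γ))
    (ψ : Ed d → ℝ) (hψC2 : ContDiff ℝ 2 ψ) (hψgrow : GrowthW W ψ) :
    -- the equivalence
    (I0Wconv K V W ψ ↔
      ∀ x y : Ed d,
        lap ψ x + lap ψ y - ⟪K x y, gradient ψ x⟫ - ⟪K y x, gradient ψ y⟫ = 0)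
    ∧
    -- "in particular"
    (I0Wconv K V W ψ → ∀ x, lap ψ x - ⟪K x x, gradient ψ x⟫ = 0)
    ∧
    -- the linear functions obtained from a skew-symmetry condition
    (∀ Q : Ed d, ∀ g : ℝ,
      (∀ x y, ⟪Q, K x y⟫ = -⟪Q, K y x⟫) →
      (∃ M : ℝ, ∀ x, 1 + ‖x‖ ≤ M * W x) →
      I0Wconv K V W (fun x => ⟪Q, x⟫ + g)) := by
  have hγ1 : γ ≤ 1 := hγ.2.trans (by norm_num)
  have hiff := key_iff V hV.continuous hV1 γ hγ.1 hγ1 W hW K hKmeas CK hKgrow ψ hψC2 hψgrow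
  refine ⟨hiff, ?_, ?_⟩
  · intro h x
    have := hiff.mp h x x
    linarith
  · intro Q g hskew hWgrow
    set ψQ : Ed d → ℝ := fun x => ⟪Q, x⟫ + g with hψQ
    have hC2 : ContDiff ℝ 2 ψQ := by
      rw [hψQ]
      exact ((InnerProductSpace.toDual ℝ (Ed d) Q).contDiff).add contDiff_const
    have hgrad : ∀ x, gradient ψQ x = Q := by
      intro x
      refine HasGradientAt.gradient ?_
      rw [hasGradientAt_iff_hasFDerivAt]
      exact ((InnerProductSpace.toDual ℝ (Ed d) Q).hasFDerivAt).add_const g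
    have hhess : ∀ x, iteratedFDeriv ℝ 2 ψQ x = 0 := by
      intro x
      rw [← norm_eq_zero, ← norm_iteratedFDeriv_fderiv]
      have hf : fderiv ℝ ψQ =
          fun _ => (InnerProductSpace.toDual ℝ (Ed d) Q : Ed d →L[ℝ] ℝ) := by
        ext1 y
        exact (((InnerProductSpace.toDual ℝ (Ed d) Q).hasFDerivAt).add_const g).fderiv
      rw [hf, iteratedFDeriv_const_of_ne one_ne_zero]
      simp
    have hlapQ : ∀ x, lap ψQ x = 0 := by
      intro x
      unfold lap hess2
      rw [hhess x]
      simp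
    have hgrow : GrowthW W ψQ := by
      obtain ⟨M, hM⟩ := hWgrow
      refine ⟨(‖Q‖ + |g|) * M, fun x => ?_⟩
      rw [hgrad, hhess]
      have h1 : |ψQ x| ≤ ‖Q‖ * ‖x‖ + |g| := by
        rw [hψQ]
        refine (abs_add_le _ _).trans ?_
        have := abs_real_inner_le_norm Q x
        linarith
      have h2 : |ψQ x| + ‖Q‖ + ‖(0 : ContinuousMultilinearMap ℝ (fun _ : Fin 2 => Ed d) ℝ)‖
          ≤ (‖Q‖ + |g|) * (1 + ‖x‖) := by
        have hx : 0 ≤ ‖x‖ := norm_nonneg _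
        have hq : 0 ≤ ‖Q‖ := norm_nonneg _
        have hg0 : 0 ≤ |g| := abs_nonneg _
        simp only [norm_zero, add_zero]
        nlinarith
      refine h2.trans ?_
      rw [mul_assoc]
      refine mul_le_mul_of_nonneg_left (hM x) (by positivity)
    refine (key_iff V hV.continuous hV1 γ hγ.1 hγ1 W hW K hKmeas CK hKgrow ψQ hC2 hgrow).mpr ?_
    intro x y
    rw [hlapQ, hlapQ, hgrad, hgrad]
    have h := hskew x y
    have c1 : ⟪K x y, Q⟫ = ⟪Q, K x y⟫ := real_inner_comm _ _
    have c2 : ⟪K y x, Q⟫ = ⟪Q, K y x⟫ := real_inner_comm _ _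
    linarith
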